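/- Let A : X ⇒ X and B : X ⇒ X be maximally monotone operators that are both 3* monotone, set D = dom A − dom B and R = ran A + ran B, and suppose that ri(D ∩ R) = D ∩ R. Then ran(Id − T_{(A,B)}) = D ∩ R (an actual equality of sets). -/

import Mathlib

open Set Pointwise

/-- Domain of a set-valued operator. -/
def svDom {X : Type*} (A : X → Set X) : Set X := {x | (A x).Nonempty}

/-- Range of a set-valued operator. -/
def svRan {X : Type*} (A : X → Set X) : Set X := ⋃ x, A x

/-- Monotonicity of a set-valued operator. -/
def IsMonotoneOp {X : Type*} [NormedAddCommGroup X] [InnerProductSpace ℝ X]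
    (A : X → Set X) : Prop :=
  ∀ ⦃x u y v : X⦄, u ∈ A x → v ∈ A y → 0 ≤ (inner ℝ (x - y) (u - v) : ℝ)

/-- Maximal monotonicity of a set-valued operator. -/
def IsMaxMonotoneOp {X : Type*} [NormedAddCommGroup X] [InnerProductSpace ℝ X]
    (A : X → Set X) : Prop :=
  IsMonotoneOp A ∧
    ∀ x u : X, (∀ y v : X, v ∈ A y → 0 ≤ (inner ℝ (x - y) (u - v) : ℝ)) → u ∈ A x

/-- `A` is 3* monotone (rectangular): for every `x ∈ dom A` and `v ∈ ran A`, the set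
`{⟪x - z, v - w⟫ : (z,w) ∈ gra A}` is bounded below. -/
def Is3StarMonotoneOp {X : Type*} [NormedAddCommGroup X] [InnerProductSpace ℝ X]
    (A : X → Set X) : Prop :=
  ∀ x ∈ svDom A, ∀ v ∈ svRan A,
    BddBelow {r : ℝ | ∃ z w : X, w ∈ A z ∧ r = (inner ℝ (x - z) (v - w) : ℝ)}

/-- Two sets are nearly equal if they have the same closure and the same relative
(intrinsic) interior. -/
def NearEq {X : Type*} [NormedAddCommGroup X] [NormedSpace ℝ X] (C D : Set X) : Prop :=
  closure C = closure D ∧ intrinsicInterior ℝ C = intrinsicInterior ℝ D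

/-- `J` is the resolvent of `A`: the single-valued, everywhere-defined map with
`x - J x ∈ A (J x)` for all `x`. -/
def IsResolventOf {X : Type*} [NormedAddCommGroup X] (J : X → X) (A : X → Set X) : Prop :=
  ∀ x : X, x - J x ∈ A (J x)

/-- The Douglas–Rachford operator `T = Id - J_A + J_B ∘ (2 J_A - Id)` built from
the resolvents `J_A` and `J_B`. -/
noncomputable def drT {X : Type*} [NormedAddCommGroup X] [NormedSpace ℝ X]
    (JA JB : X → X) : X → X :=
  fun x => x - JA x + JB ((2 : ℝ) • JA x - x)

/-! ### Auxiliary material for the proof -/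

open RealInnerProductSpace Filter Topology

section Aux

variable {X : Type*} [NormedAddCommGroup X] [InnerProductSpace ℝ X]

/-- The displacement map `Id - T_{(A,B)} = J_A - J_B ∘ (2 J_A - Id)`. -/
noncomputable def drS (JA JB : X → X) : X → X :=
  fun x => JA x - JB ((2 : ℝ) • JA x - x)

lemma drS_apply {JA JB : X → X} (x : X) :
    x - drT JA JB x = drS JA JB x := by
  simp only [drT, drS]; abel

section Monotone
variable {A B : X → Set X} {JA JB : X → X}

lemma resolvent_fne (hA : IsMonotoneOp A) (hJA : IsResolventOf JA A) (x y : X) :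
    ‖JA x - JA y‖ ^ 2 ≤ ⟪x - y, JA x - JA y⟫ := by
  have h := hA (hJA x) (hJA y)
  have e : (x - JA x) - (y - JA y) = (x - y) - (JA x - JA y) := by abel
  rw [e] at h
  rw [inner_sub_right, real_inner_self_eq_norm_sq] at h
  rw [real_inner_comm]
  linarith

lemma resolvent_lip (hA : IsMonotoneOp A) (hJA : IsResolventOf JA A) (x y : X) :
    ‖JA x - JA y‖ ≤ ‖x - y‖ := by
  have h := resolvent_fne hA hJA x y
  have h2 := real_inner_le_norm (x - y) (JA x - JA y)
  nlinarith [norm_nonneg (JA x - JA y), norm_nonneg (x - y)]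

lemma key_identity (Xv P Bv : X) :
    ⟪Xv, P - Bv⟫ = ‖P - Bv‖^2 + ⟪P, Xv - P⟫ + ⟪Bv, (2:ℝ)•P - Xv - Bv⟫ := by
  simp [inner_sub_left, inner_sub_right, inner_add_left, inner_add_right,
    real_inner_smul_left, real_inner_smul_right, ← real_inner_self_eq_norm_sq,
    real_inner_comm P Xv, real_inner_comm Bv Xv, real_inner_comm Bv P, -inner_self_eq_norm_sq_to_K]
  ring

lemma drS_fne (hA : IsMonotoneOp A) (hB : IsMonotoneOp B)
    (hJA : IsResolventOf JA A) (hJB : IsResolventOf JB B) (x y : X) :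
    ‖drS JA JB x - drS JA JB y‖ ^ 2 ≤ ⟪x - y, drS JA JB x - drS JA JB y⟫ := by
  set a := JA x
  set a' := JA y
  set b := JB ((2:ℝ) • a - x)
  set b' := JB ((2:ℝ) • a' - y)
  have hmA : 0 ≤ ⟪a - a', (x - a) - (y - a')⟫ := hA (hJA x) (hJA y)
  have hmB : 0 ≤ ⟪b - b', (((2:ℝ)•a - x) - b) - (((2:ℝ)•a' - y) - b')⟫ :=
    hB (hJB _) (hJB _)
  have e1 : (x - a) - (y - a') = (x - y) - (a - a') := by abel
  have e2 : (((2:ℝ)•a - x) - b) - (((2:ℝ)•a' - y) - b') =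
      (2:ℝ)•(a - a') - (x - y) - (b - b') := by
    rw [smul_sub]; abel
  rw [e1] at hmA; rw [e2] at hmB
  have eS : drS JA JB x - drS JA JB y = (a - a') - (b - b') := by
    show (a - b) - (a' - b') = _
    abel
  rw [eS]
  have := key_identity (x - y) (a - a') (b - b')
  linarith

lemma drS_lip (hA : IsMonotoneOp A) (hB : IsMonotoneOp B)
    (hJA : IsResolventOf JA A) (hJB : IsResolventOf JB B) (x y : X) :
    ‖drS JA JB x - drS JA JB y‖ ≤ ‖x - y‖ := by
  have h := drS_fne hA hB hJA hJB x y
  have h2 := real_inner_le_norm (x - y) (drS JA JB x - drS JA JB y)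
  nlinarith [norm_nonneg (drS JA JB x - drS JA JB y), norm_nonneg (x - y)]

lemma drT_nonexp (hA : IsMonotoneOp A) (hB : IsMonotoneOp B)
    (hJA : IsResolventOf JA A) (hJB : IsResolventOf JB B) (x y : X) :
    ‖(x - drS JA JB x) - (y - drS JA JB y)‖ ≤ ‖x - y‖ := by
  have h := drS_fne hA hB hJA hJB x y
  have e : (x - drS JA JB x) - (y - drS JA JB y)
      = (x - y) - (drS JA JB x - drS JA JB y) := by abel
  rw [e]
  have h3 := norm_sub_sq_real (x - y) (drS JA JB x - drS JA JB y)
  nlinarith [norm_nonneg ((x - y) - (drS JA JB x - drS JA JB y)), norm_nonneg (x - y)]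

lemma drS_mem (hJA : IsResolventOf JA A) (hJB : IsResolventOf JB B) (x : X) :
    drS JA JB x ∈ (svDom A - svDom B) ∩ (svRan A + svRan B) := by
  constructor
  · rw [Set.mem_sub]
    exact ⟨JA x, ⟨x - JA x, hJA x⟩, JB ((2:ℝ) • JA x - x),
      ⟨(2:ℝ) • JA x - x - JB ((2:ℝ) • JA x - x), hJB _⟩, rfl⟩
  · rw [Set.mem_add]
    refine ⟨x - JA x, Set.mem_iUnion.mpr ⟨JA x, hJA x⟩,
      ((2:ℝ) • JA x - x) - JB ((2:ℝ) • JA x - x), Set.mem_iUnion.mpr ⟨_, hJB _⟩, ?_⟩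
    show _ = JA x - JB ((2:ℝ) • JA x - x)
    rw [two_smul]; abel

end Monotone

lemma exists_tikhonov [FiniteDimensional ℝ X] (S : X → X)
    (hS : ∀ x y : X, ‖(x - S x) - (y - S y)‖ ≤ ‖x - y‖)
    (w : X) (ε : ℝ) (hε : 0 < ε) : ∃ x : X, S x + ε • x = w := by
  have hone : (0:ℝ) < 1 + ε := by linarith
  set f : X → X := fun x => (1 + ε)⁻¹ • (x - S x + w) with hf
  have hlip : LipschitzWith ⟨(1+ε)⁻¹, by positivity⟩ f := by
    apply LipschitzWith.of_dist_le_mul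
    intro x y
    simp only [hf, dist_eq_norm]
    rw [← smul_sub]
    have e : (x - S x + w) - (y - S y + w) = (x - S x) - (y - S y) := by abel
    rw [e, norm_smul]
    simp only [Real.norm_eq_abs, abs_of_pos (by positivity : (0:ℝ) < (1+ε)⁻¹)]
    push_cast
    exact mul_le_mul_of_nonneg_left (hS x y) (by positivity)
  have hK : (⟨(1+ε)⁻¹, by positivity⟩ : NNReal) < 1 := by
    apply NNReal.coe_lt_coe.mp
    show (1+ε)⁻¹ < (1:ℝ)
    rw [inv_lt_one_iff₀]
    right; linarith
  have : Nonempty X := ⟨0⟩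
  obtain ⟨x, hx⟩ := (ContractingWith.exists_fixedPoint ⟨hK, hlip⟩ 0 (edist_ne_top _ _))
  refine ⟨x, ?_⟩
  have hfx : f x = x := hx.1
  have h1 : (1 + ε) • x = x - S x + w := by
    conv_lhs => rw [← hfx]
    show (1+ε) • ((1 + ε)⁻¹ • (x - S x + w)) = _
    rw [smul_smul, mul_inv_cancel₀ (ne_of_gt hone), one_smul]
  rw [add_smul, one_smul] at h1
  have h2 : ε • x = - S x + w := by
    apply add_left_cancel (a := x); rw [h1]; abel
  rw [h2]; abel

lemma intrinsicInterior_ball {s : Set X} {w : X} (h : w ∈ intrinsicInterior ℝ s) :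
    ∃ δ > 0, ∀ v ∈ (affineSpan ℝ s).direction, ‖v‖ < δ → w + v ∈ s := by
  rw [intrinsicInterior, Set.mem_image] at h
  obtain ⟨z, hz, hzw⟩ := h
  rw [mem_interior_iff_mem_nhds, Metric.mem_nhds_iff] at hz
  obtain ⟨δ, hδ, hball⟩ := hz
  refine ⟨δ, hδ, fun v hv hnv => ?_⟩
  have hmem : v +ᵥ (z : X) ∈ affineSpan ℝ s :=
    AffineSubspace.vadd_mem_of_mem_direction hv z.2
  have hz' : (⟨v +ᵥ (z : X), hmem⟩ : affineSpan ℝ s) ∈ Metric.ball z δ := by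
    rw [Metric.mem_ball, Subtype.dist_eq]
    simp only [vadd_eq_add]
    rw [dist_eq_norm]
    simpa using hnv
  have := hball hz'
  simp only [Set.mem_preimage] at this
  simpa [← hzw, add_comm] using this

lemma identity1 (P w h q2 a x : X) (ε : ℝ) :
    ⟪P - a, (w + h - q2) - (x - a)⟫
      + ⟪(P - w) - (a - w + ε • x), q2 - ((2:ℝ)•a - x - (a - w + ε • x))⟫
    = ⟪P - a, h⟫ + ε * ⟪P + w - q2, x⟫ - ε * (1+ε) * ‖x‖^2 := by
  simp only [inner_sub_left, inner_sub_right, inner_add_left, inner_add_right,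
    real_inner_smul_left, real_inner_smul_right, ← real_inner_self_eq_norm_sq,
    real_inner_comm a P, real_inner_comm x P, real_inner_comm q2 P, real_inner_comm w P,
    real_inner_comm h P, real_inner_comm x a, real_inner_comm q2 a, real_inner_comm w a,
    real_inner_comm h a, real_inner_comm q2 x, real_inner_comm w x, real_inner_comm h x,
    real_inner_comm w q2, real_inner_comm h q2, real_inner_comm h w]
  ring

lemma identity2 (Ph q' w h a x : X) (ε : ℝ) :
    ⟪Ph - a, (w - q') - (x - a)⟫
      + ⟪(Ph - w - h) - (a - w + ε • x), q' - ((2:ℝ)•a - x - (a - w + ε • x))⟫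
    = -⟪h, x - a⟫ + ε * ⟪Ph - q' + w - h, x⟫ + ⟪h, w - q'⟫ - ε * (1+ε) * ‖x‖^2 := by
  simp only [inner_sub_left, inner_sub_right, inner_add_left, inner_add_right,
    real_inner_smul_left, real_inner_smul_right, ← real_inner_self_eq_norm_sq,
    real_inner_comm a Ph, real_inner_comm x Ph, real_inner_comm q' Ph, real_inner_comm w Ph,
    real_inner_comm h Ph, real_inner_comm x a, real_inner_comm q' a, real_inner_comm w a,
    real_inner_comm h a, real_inner_comm q' x, real_inner_comm w x, real_inner_comm h x,
    real_inner_comm w q', real_inner_comm h q', real_inner_comm h w]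
  ring

lemma keyA (P w h q2 a x : X) (ε C0 c1 c2 : ℝ) (hε : 0 ≤ ε)
    (h1 : c1 ≤ ⟪P - a, (w + h - q2) - (x - a)⟫)
    (h2 : c2 ≤ ⟪(P - w) - (a - w + ε • x), q2 - ((2:ℝ)•a - x - (a - w + ε • x))⟫)
    (hC0 : ε * ‖x‖ ≤ C0) :
    ⟪a, h⟫ ≤ ⟪P, h⟫ + C0 * ‖P + w - q2‖ - c1 - c2 := by
  have hI := identity1 P w h q2 a x ε
  have hcs : ⟪P + w - q2, x⟫ ≤ ‖P + w - q2‖ * ‖x‖ := real_inner_le_norm _ _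
  have hεx : ε * ⟪P + w - q2, x⟫ ≤ C0 * ‖P + w - q2‖ := by
    nlinarith [norm_nonneg (P + w - q2), norm_nonneg x]
  have hnn : 0 ≤ ε * (1+ε) * ‖x‖^2 := by positivity
  have hsub : ⟪P - a, h⟫ = ⟪P, h⟫ - ⟪a, h⟫ := inner_sub_left _ _ _
  linarith

lemma keyB (Ph w h qB a x : X) (ε C0 c1 c2 : ℝ) (hε : 0 ≤ ε)
    (h1 : c1 ≤ ⟪Ph - a, (w - qB) - (x - a)⟫)
    (h2 : c2 ≤ ⟪(Ph - w - h) - (a - w + ε • x), qB - ((2:ℝ)•a - x - (a - w + ε • x))⟫)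
    (hC0 : ε * ‖x‖ ≤ C0) :
    ⟪h, x - a⟫ ≤ C0 * ‖Ph - qB + w - h‖ + ⟪h, w - qB⟫ - c1 - c2 := by
  have hI := identity2 Ph qB w h a x ε
  have hcs : ⟪Ph - qB + w - h, x⟫ ≤ ‖Ph - qB + w - h‖ * ‖x‖ := real_inner_le_norm _ _
  have hεx : ε * ⟪Ph - qB + w - h, x⟫ ≤ C0 * ‖Ph - qB + w - h‖ := by
    nlinarith [norm_nonneg (Ph - qB + w - h), norm_nonneg x]
  have hnn : 0 ≤ ε * (1+ε) * ‖x‖^2 := by positivity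
  linarith

lemma case_bounded [FiniteDimensional ℝ X] (S : X → X)
    (hlip : ∀ x y : X, ‖S x - S y‖ ≤ ‖x - y‖) (w : X)
    (xs : ℕ → X) (hxs : ∀ n, S (xs n) + ((n:ℝ)+1)⁻¹ • xs n = w)
    (M : ℝ) (hM : ∀ N : ℕ, ∃ n, N ≤ n ∧ ‖xs n‖ ≤ M) :
    ∃ x, S x = w := by
  obtain ⟨φ, hφmono, hφ⟩ := Filter.extraction_of_frequently_atTop
    (Filter.frequently_atTop.mpr (fun a => (hM a).imp (fun n hn => ⟨hn.1, hn.2⟩)))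
  have hball : ∀ j, xs (φ j) ∈ Metric.closedBall (0:X) M :=
    fun j => mem_closedBall_zero_iff.mpr (hφ j)
  obtain ⟨xb, -, ψ, hψmono, hψtend⟩ :=
    tendsto_subseq_of_bounded Metric.isBounded_closedBall hball
  have hScont : Continuous S := by
    have : LipschitzWith 1 S := LipschitzWith.of_dist_le_mul (fun x y => by
      simpa [dist_eq_norm] using hlip x y)
    exact this.continuous
  have h1 : Tendsto (fun j => S (xs (φ (ψ j)))) atTop (𝓝 (S xb)) :=
    (hScont.tendsto xb).comp hψtend
  have h2 : Tendsto (fun j => S (xs (φ (ψ j)))) atTop (𝓝 w) := by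
    have he : ∀ j, S (xs (φ (ψ j))) = w - ((φ (ψ j) : ℝ)+1)⁻¹ • xs (φ (ψ j)) := by
      intro j
      have := hxs (φ (ψ j))
      rw [← this]; abel
    simp only [he]
    have h0 : Tendsto (fun j => ((φ (ψ j) : ℝ)+1)⁻¹ • xs (φ (ψ j))) atTop (𝓝 (0:X)) := by
      rw [tendsto_zero_iff_norm_tendsto_zero]
      apply squeeze_zero (f := fun j : ℕ => ‖((φ (ψ j) : ℝ)+1)⁻¹ • xs (φ (ψ j))‖)
        (g := fun j : ℕ => ((j:ℝ)+1)⁻¹ * M) (fun j => norm_nonneg _)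
      · intro j
        rw [norm_smul, Real.norm_eq_abs, abs_of_pos (by positivity)]
        have hle : ((j:ℝ)+1)⁻¹ ≥ ((φ (ψ j) : ℝ)+1)⁻¹ := by
          apply inv_anti₀ (by positivity)
          have : j ≤ φ (ψ j) := le_trans (hψmono.le_apply) (hφmono.le_apply)
          have : (j:ℝ) ≤ (φ (ψ j) : ℝ) := by exact_mod_cast this
          linarith
        have hM0 : 0 ≤ M := le_trans (norm_nonneg _) (hφ 0)
        have := hφ (ψ j)
        calc ((φ (ψ j) : ℝ)+1)⁻¹ * ‖xs (φ (ψ j))‖ ≤ ((φ (ψ j) : ℝ)+1)⁻¹ * M :=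
              mul_le_mul_of_nonneg_left this (by positivity)
          _ ≤ ((j:ℝ)+1)⁻¹ * M := mul_le_mul_of_nonneg_right hle hM0
      · have := tendsto_one_div_add_atTop_nhds_zero_nat (𝕜 := ℝ)
        have h := this.mul_const M
        simpa [one_div] using h
    have := tendsto_const_nhds (x := w) (f := atTop (α := ℕ))
    simpa using this.sub h0
  exact ⟨xb, tendsto_nhds_unique h1 h2⟩

lemma case_unbounded [FiniteDimensional ℝ X] {A B : X → Set X} {JA JB : X → X}
    (hJA : IsResolventOf JA A) (hJB : IsResolventOf JB B)
    (hA3 : Is3StarMonotoneOp A) (hB3 : Is3StarMonotoneOp B)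
    (hJAlip : ∀ x y : X, ‖JA x - JA y‖ ≤ ‖x - y‖)
    (w : X) (hw : w ∈ (svDom A - svDom B) ∩ (svRan A + svRan B))
    (δ : ℝ) (hδpos : 0 < δ)
    (hδ : ∀ v ∈ (affineSpan ℝ ((svDom A - svDom B) ∩ (svRan A + svRan B))).direction,
      ‖v‖ < δ → w + v ∈ (svDom A - svDom B) ∩ (svRan A + svRan B))
    (xs : ℕ → X)
    (hxs : ∀ n : ℕ, drS JA JB (xs n) + ((n:ℝ)+1)⁻¹ • xs n = w)
    (C0 : ℝ) (hC0 : ∀ n : ℕ, ((n:ℝ)+1)⁻¹ * ‖xs n‖ ≤ C0)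
    (hunb : ∀ M : ℝ, ∃ N : ℕ, ∀ n, N ≤ n → M < ‖xs n‖) : False := by
  classical
  set s : Set X := (svDom A - svDom B) ∩ (svRan A + svRan B) with hs
  set L := (affineSpan ℝ s).direction with hL
  obtain ⟨P, hP, P', hP', hPP'⟩ := Set.mem_sub.mp hw.1
  obtain ⟨qA, hqA, qB, hqB, hqq⟩ := Set.mem_add.mp hw.2
  have hP'e : P' = P - w := by rw [← hPP']; abel
  have hεpos : ∀ n : ℕ, (0:ℝ) < ((n:ℝ)+1)⁻¹ := fun n => by positivity
  have hb : ∀ n : ℕ, JB ((2:ℝ) • JA (xs n) - xs n)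
      = JA (xs n) - w + ((n:ℝ)+1)⁻¹ • xs n := by
    intro n
    have h := hxs n
    show JB ((2:ℝ) • JA (xs n) - xs n) = _
    rw [← h]
    show _ = JA (xs n) - (JA (xs n) - JB _ + _) + _
    abel
  obtain ⟨N0, hN0⟩ := hunb 1
  set m : ℕ → ℕ := fun j => N0 + j with hm
  have ht1 : ∀ j, 1 < ‖xs (m j)‖ := fun j => hN0 _ (Nat.le_add_right _ _)
  set C : ℝ := 1 + ‖JA 0‖ + C0 + 1 with hC
  have hCnn : 0 ≤ C0 := le_trans (by positivity) (hC0 0)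
  have hmem : ∀ j, ((‖xs (m j)‖⁻¹ • xs (m j), ‖xs (m j)‖⁻¹ • JA (xs (m j)),
      ((m j : ℝ)+1)⁻¹ • xs (m j)) : X × X × X) ∈ Metric.closedBall (0 : X × X × X) C := by
    intro j
    have htpos : (0:ℝ) < ‖xs (m j)‖ := lt_trans one_pos (ht1 j)
    have htinv : ‖xs (m j)‖⁻¹ ≤ 1 := by
      rw [inv_le_one_iff₀]; right; linarith [ht1 j]
    rw [mem_closedBall_zero_iff, Prod.norm_def, Prod.norm_def]
    have e1 : ‖(‖xs (m j)‖⁻¹ • xs (m j))‖ = 1 := by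
      rw [norm_smul, Real.norm_eq_abs, abs_of_pos (inv_pos.mpr htpos),
        inv_mul_cancel₀ htpos.ne']
    have e2 : ‖(‖xs (m j)‖⁻¹ • JA (xs (m j)))‖ ≤ 1 + ‖JA 0‖ := by
      rw [norm_smul, Real.norm_eq_abs, abs_of_pos (inv_pos.mpr htpos)]
      have h3 : ‖JA (xs (m j))‖ ≤ ‖xs (m j)‖ + ‖JA 0‖ := by
        have := hJAlip (xs (m j)) 0
        have h4 := norm_sub_norm_le (JA (xs (m j))) (JA 0)
        simp only [sub_zero] at this
        linarith
      calc ‖xs (m j)‖⁻¹ * ‖JA (xs (m j))‖ ≤ ‖xs (m j)‖⁻¹ * (‖xs (m j)‖ + ‖JA 0‖) := by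
            apply mul_le_mul_of_nonneg_left h3 (by positivity)
        _ = 1 + ‖xs (m j)‖⁻¹ * ‖JA 0‖ := by field_simp
        _ ≤ 1 + ‖JA 0‖ := by nlinarith [norm_nonneg (JA (0:X))]
    have e3 : ‖(((m j : ℝ)+1)⁻¹ • xs (m j))‖ ≤ C0 := by
      rw [norm_smul, Real.norm_eq_abs, abs_of_pos (hεpos _)]
      exact hC0 _
    have : (0:ℝ) ≤ ‖JA (0:X)‖ := norm_nonneg _
    apply max_le (by rw [e1]; simp [hC]; linarith)
    apply max_le (by simp [hC]; linarith) (by simp [hC]; linarith)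
  obtain ⟨lim, -, φ, hφmono, hφtend⟩ :=
    tendsto_subseq_of_bounded Metric.isBounded_closedBall hmem
  set d := lim.1 with hd
  set α := lim.2.1 with hα
  set nj : ℕ → ℕ := fun j => m (φ j) with hnj
  have htpos : ∀ j, (0:ℝ) < ‖xs (nj j)‖ := fun j => lt_trans one_pos (ht1 (φ j))
  have htend_d : Tendsto (fun j => ‖xs (nj j)‖⁻¹ • xs (nj j)) atTop (𝓝 d) := by
    exact (continuous_fst.tendsto lim).comp hφtend
  have htend_a : Tendsto (fun j => ‖xs (nj j)‖⁻¹ • JA (xs (nj j))) atTop (𝓝 α) := by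
    exact ((continuous_fst.comp continuous_snd).tendsto lim).comp hφtend
  have hinv0 : Tendsto (fun j => ‖xs (nj j)‖⁻¹) atTop (𝓝 0) := by
    apply Filter.Tendsto.comp tendsto_inv_atTop_zero
    rw [tendsto_atTop]
    intro b
    obtain ⟨N, hN⟩ := hunb b
    rw [eventually_atTop]
    refine ⟨N, fun j hj => ?_⟩
    have : N ≤ nj j := le_trans hj (le_trans (hφmono.le_apply) (Nat.le_add_left _ _))
    exact le_of_lt (hN _ this)
  have hd1 : ‖d‖ = 1 := by
    have h1 : Tendsto (fun j => ‖(‖xs (nj j)‖⁻¹ • xs (nj j))‖) atTop (𝓝 ‖d‖) :=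
      htend_d.norm
    have h2 : ∀ j, ‖(‖xs (nj j)‖⁻¹ • xs (nj j))‖ = 1 := by
      intro j
      rw [norm_smul, Real.norm_eq_abs, abs_of_pos (inv_pos.mpr (htpos j)),
        inv_mul_cancel₀ (htpos j).ne']
    simp only [h2] at h1
    exact tendsto_nhds_unique h1 tendsto_const_nhds
  have stepA : ∀ h ∈ L, ‖h‖ < δ → ⟪α, h⟫ ≤ 0 := by
    intro h hhL hhδ
    obtain ⟨q1, hq1, q2, hq2, hq12⟩ := Set.mem_add.mp (hδ h hhL hhδ).2
    obtain ⟨c1, hc1⟩ := hA3 P hP q1 hq1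
    obtain ⟨c2, hc2⟩ := hB3 P' hP' q2 hq2
    have hq1e : q1 = w + h - q2 := by rw [← hq12]; abel
    set K := ⟪P, h⟫ + C0 * ‖P + w - q2‖ - c1 - c2 with hK
    have key : ∀ n : ℕ, ⟪JA (xs n), h⟫ ≤ K := by
      intro n
      have h1 : c1 ≤ ⟪P - JA (xs n), (w + h - q2) - (xs n - JA (xs n))⟫ := by
        have := hc1 ⟨JA (xs n), xs n - JA (xs n), hJA (xs n), rfl⟩
        rw [hq1e] at this; exact this
      have h2 : c2 ≤ ⟪(P - w) - (JA (xs n) - w + ((n:ℝ)+1)⁻¹ • xs n),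
          q2 - ((2:ℝ) • JA (xs n) - xs n - (JA (xs n) - w + ((n:ℝ)+1)⁻¹ • xs n))⟫ := by
        have := hc2 ⟨JB ((2:ℝ) • JA (xs n) - xs n),
          (2:ℝ) • JA (xs n) - xs n - JB ((2:ℝ) • JA (xs n) - xs n), hJB _, rfl⟩
        rw [hP'e, hb n] at this
        exact this
      exact keyA P w h q2 (JA (xs n)) (xs n) _ C0 c1 c2 (le_of_lt (hεpos n)) h1 h2 (hC0 n)
    have hub : ∀ j, ⟪(‖xs (nj j)‖⁻¹ • JA (xs (nj j))), h⟫ ≤ ‖xs (nj j)‖⁻¹ * K := by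
      intro j
      rw [real_inner_smul_left]
      exact mul_le_mul_of_nonneg_left (key (nj j)) (by positivity)
    have hlim : Tendsto (fun j => ⟪(‖xs (nj j)‖⁻¹ • JA (xs (nj j))), h⟫) atTop (𝓝 ⟪α, h⟫) :=
      htend_a.inner tendsto_const_nhds
    have hK0 : Tendsto (fun j => ‖xs (nj j)‖⁻¹ * K) atTop (𝓝 0) := by
      have := hinv0.mul_const K
      simpa using this
    exact le_of_tendsto_of_tendsto' hlim hK0 hub
  have stepB : ∀ h ∈ L, ‖h‖ < δ → ⟪h, d - α⟫ ≤ 0 := by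
    intro h hhL hhδ
    obtain ⟨Ph, hPh, Ph', hPh', hPhh⟩ := Set.mem_sub.mp (hδ h hhL hhδ).1
    obtain ⟨c1, hc1⟩ := hA3 Ph hPh qA hqA
    obtain ⟨c2, hc2⟩ := hB3 Ph' hPh' qB hqB
    have hqAe : qA = w - qB := by rw [← hqq]; abel
    have hPh'e : Ph' = Ph - w - h := by
      rw [show Ph - w - h = Ph - (w + h) by abel, ← hPhh]; abel
    set K := C0 * ‖Ph - qB + w - h‖ + ⟪h, w - qB⟫ - c1 - c2 with hK
    have key : ∀ n : ℕ, ⟪h, xs n - JA (xs n)⟫ ≤ K := by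
      intro n
      have h1 : c1 ≤ ⟪Ph - JA (xs n), (w - qB) - (xs n - JA (xs n))⟫ := by
        have := hc1 ⟨JA (xs n), xs n - JA (xs n), hJA (xs n), rfl⟩
        rw [hqAe] at this; exact this
      have h2 : c2 ≤ ⟪(Ph - w - h) - (JA (xs n) - w + ((n:ℝ)+1)⁻¹ • xs n),
          qB - ((2:ℝ) • JA (xs n) - xs n - (JA (xs n) - w + ((n:ℝ)+1)⁻¹ • xs n))⟫ := by
        have := hc2 ⟨JB ((2:ℝ) • JA (xs n) - xs n),
          (2:ℝ) • JA (xs n) - xs n - JB ((2:ℝ) • JA (xs n) - xs n), hJB _, rfl⟩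
        rw [hPh'e, hb n] at this
        exact this
      exact keyB Ph w h qB (JA (xs n)) (xs n) _ C0 c1 c2 (le_of_lt (hεpos n)) h1 h2 (hC0 n)
    have hub : ∀ j, ⟪h, ‖xs (nj j)‖⁻¹ • xs (nj j) - ‖xs (nj j)‖⁻¹ • JA (xs (nj j))⟫
        ≤ ‖xs (nj j)‖⁻¹ * K := by
      intro j
      rw [← smul_sub, real_inner_smul_right]
      exact mul_le_mul_of_nonneg_left (key (nj j)) (by positivity)
    have hlim : Tendsto (fun j => ⟪h, ‖xs (nj j)‖⁻¹ • xs (nj j)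
        - ‖xs (nj j)‖⁻¹ • JA (xs (nj j))⟫) atTop (𝓝 ⟪h, d - α⟫) :=
      Filter.Tendsto.inner tendsto_const_nhds (htend_d.sub htend_a)
    have hK0 : Tendsto (fun j => ‖xs (nj j)‖⁻¹ * K) atTop (𝓝 0) := by
      have := hinv0.mul_const K
      simpa using this
    exact le_of_tendsto_of_tendsto' hlim hK0 hub
  have hsmall : ∀ h ∈ L, ‖h‖ < δ → ⟪h, d⟫ ≤ 0 := by
    intro h hhL hhδ
    have h1 := stepA h hhL hhδ
    have h2 := stepB h hhL hhδ
    rw [inner_sub_right] at h2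
    rw [real_inner_comm] at h1
    linarith
  have hany : ∀ h ∈ L, ⟪h, d⟫ ≤ 0 := by
    intro h hhL
    rcases eq_or_ne h 0 with rfl | hne
    · simp
    · have hnorm : (0:ℝ) < ‖h‖ := norm_pos_iff.mpr hne
      set c : ℝ := δ / (2 * ‖h‖) with hc
      have hcpos : 0 < c := by positivity
      have h1 : c • h ∈ L := Submodule.smul_mem _ _ hhL
      have h2 : ‖c • h‖ < δ := by
        rw [norm_smul, Real.norm_eq_abs, abs_of_pos hcpos, hc]
        rw [div_mul_eq_mul_div, mul_comm]
        rw [mul_comm (2:ℝ) ‖h‖, ← div_div]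
        field_simp
        linarith
      have := hsmall _ h1 h2
      rw [real_inner_smul_left] at this
      nlinarith
  have hzero : ∀ h ∈ L, ⟪h, d⟫ = 0 := by
    intro h hhL
    have h1 := hany h hhL
    have h2 := hany (-h) (neg_mem hhL)
    rw [inner_neg_left] at h2
    linarith
  have hmemL : ∀ n : ℕ, (((n:ℝ)+1)⁻¹ • xs n) ∈ L := by
    intro n
    have h1 : drS JA JB (xs n) ∈ s := drS_mem hJA hJB (xs n)
    have h2 : w ∈ affineSpan ℝ s := subset_affineSpan ℝ s hw
    have h3 : drS JA JB (xs n) ∈ affineSpan ℝ s := subset_affineSpan ℝ s h1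
    have h4 := AffineSubspace.vsub_mem_direction h2 h3
    have e : w -ᵥ drS JA JB (xs n) = ((n:ℝ)+1)⁻¹ • xs n := by
      rw [vsub_eq_sub, ← hxs n]; abel
    rw [e] at h4
    exact h4
  have hfin : ∀ j, ⟪(‖xs (nj j)‖⁻¹ • xs (nj j)), d⟫ = 0 := by
    intro j
    have h1 := hzero _ (hmemL (nj j))
    rw [real_inner_smul_left] at h1
    have h2 : ⟪xs (nj j), d⟫ = 0 :=
      (mul_eq_zero.mp h1).resolve_left (ne_of_gt (hεpos (nj j)))
    rw [real_inner_smul_left, h2, mul_zero]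
  have hlim2 : Tendsto (fun j => ⟪(‖xs (nj j)‖⁻¹ • xs (nj j)), d⟫) atTop (𝓝 ⟪d, d⟫) :=
    htend_d.inner tendsto_const_nhds
  simp only [hfin] at hlim2
  have : ⟪d, d⟫ = 0 := tendsto_nhds_unique hlim2 tendsto_const_nhds
  rw [real_inner_self_eq_norm_sq, hd1] at this
  norm_num at this

end Aux

/-- For maximally monotone, 3* monotone `A, B`, if `ri (D ∩ R) = D ∩ R` where
`D = dom A - dom B` and `R = ran A + ran B`, then `ran (Id - T_{(A,B)}) = D ∩ R`. -/
theorem ran_id_sub_drT_eq {X : Type*} [NormedAddCommGroup X] [InnerProductSpace ℝ X]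
    [FiniteDimensional ℝ X] (A B : X → Set X)
    (hA : IsMaxMonotoneOp A) (hB : IsMaxMonotoneOp B)
    (hA3 : Is3StarMonotoneOp A) (hB3 : Is3StarMonotoneOp B)
    (JA JB : X → X) (hJA : IsResolventOf JA A) (hJB : IsResolventOf JB B)
    (hri : intrinsicInterior ℝ ((svDom A - svDom B) ∩ (svRan A + svRan B)) =
      (svDom A - svDom B) ∩ (svRan A + svRan B)) :
    Set.range (fun x => x - drT JA JB x) =
      (svDom A - svDom B) ∩ (svRan A + svRan B) := by
  apply Set.Subset.antisymm
  · rintro w ⟨x, rfl⟩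
    simp only
    rw [drS_apply]
    exact drS_mem hJA hJB x
  · intro w hw
    have hwi : w ∈ intrinsicInterior ℝ ((svDom A - svDom B) ∩ (svRan A + svRan B)) := by
      rw [hri]; exact hw
    obtain ⟨δ, hδpos, hδ⟩ := intrinsicInterior_ball hwi
    have hex : ∀ n : ℕ, ∃ x : X, drS JA JB x + ((n:ℝ)+1)⁻¹ • x = w := by
      intro n
      apply exists_tikhonov (drS JA JB) (drT_nonexp hA.1 hB.1 hJA hJB) w _ (by positivity)
    choose xs hxs using hex
    set C0 : ℝ := ‖w - drS JA JB 0‖ with hC0def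
    have hC0 : ∀ n : ℕ, ((n:ℝ)+1)⁻¹ * ‖xs n‖ ≤ C0 := by
      intro n
      set ε : ℝ := ((n:ℝ)+1)⁻¹ with hε
      have hεpos : (0:ℝ) < ε := by positivity
      have hfe := drS_fne hA.1 hB.1 hJA hJB (xs n) 0
      have hS : drS JA JB (xs n) = w - ε • xs n := by
        rw [← hxs n]; abel
      rw [hS] at hfe
      have h1 : 0 ≤ ⟪xs n - 0, w - ε • xs n - drS JA JB 0⟫ :=
        le_trans (by positivity) hfe
      have e : w - ε • xs n - drS JA JB 0 = (w - drS JA JB 0) - ε • xs n := by abel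
      rw [e, sub_zero, inner_sub_right, real_inner_smul_right,
        real_inner_self_eq_norm_sq] at h1
      have h2 : ⟪xs n, w - drS JA JB 0⟫ ≤ ‖xs n‖ * C0 := by
        rw [hC0def, mul_comm]
        have := real_inner_le_norm (xs n) (w - drS JA JB 0)
        linarith [this]
      rcases eq_or_lt_of_le (norm_nonneg (xs n)) with h3 | h3
      · rw [← h3, mul_zero]
        rw [hC0def]; positivity
      · nlinarith
    by_cases hbdd : ∃ M : ℝ, ∀ N : ℕ, ∃ n, N ≤ n ∧ ‖xs n‖ ≤ M
    · obtain ⟨M, hM⟩ := hbdd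
      obtain ⟨x, hx⟩ := case_bounded (drS JA JB) (drS_lip hA.1 hB.1 hJA hJB) w xs hxs M hM
      exact ⟨x, by show x - drT JA JB x = w; rw [drS_apply]; exact hx⟩
    · exfalso
      push_neg at hbdd
      refine case_unbounded hJA hJB hA3 hB3 (resolvent_lip hA.1 hJA) w hw δ hδpos hδ
        xs hxs C0 hC0 ?_
      intro M
      obtain ⟨N, hN⟩ := hbdd M
      exact ⟨N, fun n hn => hN n hn⟩
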